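/- Let L be a selfadjoint operator in L²(X, m), bounded below, with E0 the infimum of the spectrum of L, and assume that the semigroup (e^{-tL})_{t≥0} has a kernel p satisfying (K1), (K2), (K3). For t > 0 and x ∈ X set Φ_t(x) := (e^{tE0} p_t(x, x))^{1/2}. Then the following are equivalent: (i) E0 is an eigenvalue of L; (ii) the pointwise limit as t → ∞ of Φ_t is not the zero function in L²(X, m); (iii) there exists an x ∈ X such that lim_{t→∞} Φ_t(x) ≠ 0. -/

import Mathlib

open MeasureTheory Filter Topology
open scoped InnerProductSpace ENNReal

noncomputable section

/-- The infimum of the topological support of a Borel measure on `ℝ`, following the paper's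
definition: `supp μ = {E : ∀ δ > 0, μ(E - δ, E + δ) > 0}`. -/
def suppInf (μ : Measure ℝ) : ℝ :=
  sInf {E : ℝ | ∀ δ > 0, 0 < μ (Set.Ioo (E - δ) (E + δ))}

/-- `T` is the heat semigroup `(e^{-tL})_{t ≥ 0}` of a selfadjoint operator `L` in `H` that is
bounded below, where `ρ f` is the spectral measure of `f` with respect to `L` (the finite Borel
measure supported in `[E0, ∞)` with `⟪f, e^{-tL} f⟫ = ∫ e^{-ts} dρ_f(s)` for all `t ≥ 0`),
and `E0` is the infimum of the spectrum of `L` (equivalently, `‖e^{-tL}‖ = e^{-t·E0}`). -/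
structure IsHeatSemigroupOf {H : Type*} [NormedAddCommGroup H] [InnerProductSpace ℝ H]
    [CompleteSpace H] (T : ℝ → H →L[ℝ] H) (ρ : H → Measure ℝ) (E0 : ℝ) : Prop where
  symm : ∀ t : ℝ, 0 ≤ t → ∀ f g : H, ⟪T t f, g⟫_ℝ = ⟪f, T t g⟫_ℝ
  map_zero : T 0 = 1
  semigroup : ∀ s t : ℝ, 0 ≤ s → 0 ≤ t → T (s + t) = T s ∘L T t
  finite : ∀ f : H, ρ f Set.univ ≠ ⊤
  support_bddBelow : ∀ f : H, ρ f (Set.Iio E0) = 0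
  inner_eq : ∀ (f : H) (t : ℝ), 0 ≤ t → ⟪f, T t f⟫_ℝ = ∫ s, Real.exp (-(t * s)) ∂(ρ f)
  norm_eq : ∀ t : ℝ, 0 ≤ t → ‖T t‖ = Real.exp (-(t * E0))

/-- `p` is a kernel of the semigroup `T = (e^{-tL})_{t>0}` on `L²(X, m)` in the sense of the
paper: a measurable function `p : (0,∞) × X × X → (0,∞)` with
`e^{-tL} f(x) = ∫ p_t(x,y) f(y) dm(y)` for a.e. `x`, satisfying (K1) symmetry,
(K2) `p_t(x,·) ∈ L²(X,m)`, and (K3) the Chapman–Kolmogorov identity. (The values of the Lean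
function `p` at `t ≤ 0` are irrelevant.) -/
structure IsKernelOf {X : Type*} [MeasurableSpace X] (m : Measure X)
    (T : ℝ → Lp ℝ 2 m →L[ℝ] Lp ℝ 2 m) (p : ℝ → X → X → ℝ) : Prop where
  meas : Measurable fun q : ℝ × X × X => p q.1 q.2.1 q.2.2
  pos : ∀ t : ℝ, 0 < t → ∀ x y : X, 0 < p t x y
  symm : ∀ t : ℝ, 0 < t → ∀ x y : X, p t x y = p t y x
  memL2 : ∀ t : ℝ, 0 < t → ∀ x : X, MemLp (p t x) 2 m
  chapman : ∀ t s : ℝ, 0 < t → 0 < s → ∀ x y : X,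
      p (t + s) x y = ∫ z, p t x z * p s z y ∂m
  represents : ∀ t : ℝ, 0 < t → ∀ f : Lp ℝ 2 m,
      (T t f : X → ℝ) =ᵐ[m] fun x => ∫ y, p t x y * f y ∂m

section Helpers

variable {X : Type*} [MeasurableSpace X] {m : Measure X}
  {T : ℝ → Lp ℝ 2 m →L[ℝ] Lp ℝ 2 m} {p : ℝ → X → X → ℝ}

lemma inner_L2' (f g : Lp ℝ 2 m) : ⟪f, g⟫_ℝ = ∫ x, f x * g x ∂m := by
  rw [MeasureTheory.L2.inner_def]
  simp [RCLike.inner_apply, conj_trivial]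
  exact integral_congr_ae (Eventually.of_forall fun x => mul_comm _ _)

lemma toLp_inner_eq (hp : IsKernelOf m T p) (t : ℝ) (ht : 0 < t) (x : X) (g : Lp ℝ 2 m) :
    ⟪MemLp.toLp (p t x) (hp.memL2 t ht x), g⟫_ℝ = ∫ y, p t x y * g y ∂m := by
  rw [inner_L2']
  refine integral_congr_ae ?_
  filter_upwards [(hp.memL2 t ht x).coeFn_toLp] with y hy
  rw [hy]

lemma toLp_norm_eq (hp : IsKernelOf m T p) (t : ℝ) (ht : 0 < t) (x : X) :
    ‖MemLp.toLp (p t x) (hp.memL2 t ht x)‖ = Real.sqrt (p (2 * t) x x) := by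
  have h1 : ⟪MemLp.toLp (p t x) (hp.memL2 t ht x), MemLp.toLp (p t x) (hp.memL2 t ht x)⟫_ℝ
      = p (2 * t) x x := by
    rw [toLp_inner_eq hp t ht x]
    have h2 : ∫ y, p t x y * (MemLp.toLp (p t x) (hp.memL2 t ht x)) y ∂m
        = ∫ y, p t x y * p t y x ∂m := by
      refine integral_congr_ae ?_
      filter_upwards [(hp.memL2 t ht x).coeFn_toLp] with y hy
      rw [hy, hp.symm t ht x y]
    rw [h2, ← hp.chapman t t ht ht x x, two_mul]
  have h2 : ‖MemLp.toLp (p t x) (hp.memL2 t ht x)‖ ^ 2 = p (2 * t) x x := by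
    rw [← real_inner_self_eq_norm_sq, h1]
  rw [← h2, Real.sqrt_sq (norm_nonneg _)]

lemma kernel_inner_eq (hp : IsKernelOf m T p) (x : X) (t : ℝ) (ht : 0 < t) :
    ⟪MemLp.toLp (p 1 x) (hp.memL2 1 one_pos x),
      T t (MemLp.toLp (p 1 x) (hp.memL2 1 one_pos x))⟫_ℝ = p (t + 2) x x := by
  set f := MemLp.toLp (p 1 x) (hp.memL2 1 one_pos x) with hf
  have hrep : (T t f : X → ℝ) =ᵐ[m] fun y => p (t + 1) y x := by
    refine (hp.represents t ht f).trans (Eventually.of_forall fun y => ?_)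
    show ∫ z, p t y z * f z ∂m = p (t + 1) y x
    have h1 : ∫ z, p t y z * f z ∂m = ∫ z, p t y z * p 1 z x ∂m := by
      refine integral_congr_ae ?_
      filter_upwards [(hp.memL2 1 one_pos x).coeFn_toLp] with z hz
      rw [hz, hp.symm 1 one_pos x z]
    rw [h1, ← hp.chapman t 1 ht one_pos y x]
  have h2 : ∫ y, f y * (T t f) y ∂m = ∫ y, p 1 x y * p (t + 1) y x ∂m := by
    refine integral_congr_ae ?_
    filter_upwards [(hp.memL2 1 one_pos x).coeFn_toLp, hrep] with y hy1 hy2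
    rw [hy1, hy2]
  rw [inner_L2', h2, ← hp.chapman 1 (t + 1) one_pos (by linarith) x x,
    show (1:ℝ) + (t + 1) = t + 2 by ring]

end Helpers

lemma exists_ground_aux {H : Type*} [NormedAddCommGroup H] [InnerProductSpace ℝ H]
    [CompleteSpace H] {T : ℝ → H →L[ℝ] H} {ρ : H → Measure ℝ} {E0 : ℝ}
    (hT : IsHeatSemigroupOf T ρ E0) (f : H) (c : ℝ) (hc : c ≠ 0)
    (hlim : Tendsto (fun t : ℝ => Real.exp (t * E0) * ⟪f, T t f⟫_ℝ) atTop (𝓝 c)) :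
    ∃ g : H, g ≠ 0 ∧ ∀ t : ℝ, 0 ≤ t → T t g = Real.exp (-(t * E0)) • g := by
  set h : ℝ → ℝ := fun t => Real.exp (t * E0) * ⟪f, T t f⟫_ℝ with hh
  set w : ℝ → H := fun t => Real.exp (t * E0) • T t f with hw
  -- inner products of the w's
  have hw_inner : ∀ a b : ℝ, 0 ≤ a → 0 ≤ b → ⟪w a, w b⟫_ℝ = h (a + b) := by
    intro a b ha hb
    have hsg : T a (T b f) = T (a + b) f := by rw [hT.semigroup a b ha hb]; rfl
    simp only [hw, real_inner_smul_left, real_inner_smul_right, hh]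
    rw [hT.symm a ha f (T b f), hsg, show (a + b) * E0 = a * E0 + b * E0 by ring,
      Real.exp_add]
    ring
  -- the key norm-difference tendsto lemma
  have key : ∀ {ι : Type} (l : Filter ι) (α β : ι → ℝ), Tendsto α l atTop →
      Tendsto β l atTop → Tendsto (fun i => ‖w (α i) - w (β i)‖) l (𝓝 0) := by
    intro ι l α β hα hβ
    have hsq : Tendsto (fun i => h (α i + α i) - 2 * h (α i + β i) + h (β i + β i)) l
        (𝓝 (c - 2 * c + c)) := by
      exact ((hlim.comp (Tendsto.atTop_add_atTop hα hα)).sub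
        ((hlim.comp (Tendsto.atTop_add_atTop hα hβ)).const_mul 2)).add
        (hlim.comp (Tendsto.atTop_add_atTop hβ hβ))
    rw [show c - 2 * c + c = 0 by ring] at hsq
    have heq : ∀ᶠ i in l, Real.sqrt (h (α i + α i) - 2 * h (α i + β i) + h (β i + β i))
        = ‖w (α i) - w (β i)‖ := by
      filter_upwards [hα.eventually_ge_atTop 0, hβ.eventually_ge_atTop 0] with i ha hb
      have hs2 : ‖w (α i) - w (β i)‖ ^ 2
          = h (α i + α i) - 2 * h (α i + β i) + h (β i + β i) := by
        rw [norm_sub_sq_real, ← real_inner_self_eq_norm_sq, ← real_inner_self_eq_norm_sq,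
          hw_inner _ _ ha ha, hw_inner _ _ ha hb, hw_inner _ _ hb hb]
      rw [← hs2, Real.sqrt_sq (norm_nonneg _)]
    have := (Real.continuous_sqrt.tendsto 0).comp hsq
    rw [Real.sqrt_zero] at this
    exact Tendsto.congr' heq this
  -- the sequence converges
  have hcau : CauchySeq (fun n : ℕ => w n) := by
    rw [cauchySeq_iff_tendsto_dist_atTop_0]
    simp only [dist_eq_norm]
    have h1 : Tendsto (fun q : ℕ × ℕ => ((q.1 : ℝ))) atTop atTop := by
      rw [← prod_atTop_atTop_eq]
      exact tendsto_natCast_atTop_atTop.comp tendsto_fst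
    have h2 : Tendsto (fun q : ℕ × ℕ => ((q.2 : ℝ))) atTop atTop := by
      rw [← prod_atTop_atTop_eq]
      exact tendsto_natCast_atTop_atTop.comp tendsto_snd
    exact key atTop _ _ h1 h2
  obtain ⟨g, hg⟩ := cauchySeq_tendsto_of_complete hcau
  have hnat : Tendsto (fun n : ℕ => ((n : ℝ))) atTop atTop := tendsto_natCast_atTop_atTop
  -- inner product with f converges to c
  have hfg : ⟪f, g⟫_ℝ = c := by
    have h1 : Tendsto (fun n : ℕ => ⟪f, w n⟫_ℝ) atTop (𝓝 ⟪f, g⟫_ℝ) :=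
      tendsto_const_nhds.inner hg
    have h2 : ∀ n : ℕ, ⟪f, w n⟫_ℝ = h n := fun n => by
      simp only [hw, real_inner_smul_right, hh]
    have h3 : Tendsto (fun n : ℕ => h n) atTop (𝓝 c) := hlim.comp hnat
    exact tendsto_nhds_unique (Tendsto.congr h2 h1) h3
  refine ⟨g, ?_, ?_⟩
  · rintro rfl
    rw [inner_zero_right] at hfg
    exact hc hfg.symm
  · intro s hs
    have hTs : Tendsto (fun n : ℕ => T s (w n)) atTop (𝓝 (T s g)) :=
      ((T s).continuous.tendsto g).comp hg
    have hshift : Tendsto (fun n : ℕ => w ((n : ℝ) + s)) atTop (𝓝 g) := by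
      have hz := key atTop (fun n : ℕ => (n : ℝ) + s) (fun n : ℕ => (n : ℝ))
        (tendsto_atTop_add_const_right atTop s hnat) hnat
      have hz' : Tendsto (fun n : ℕ => w ((n : ℝ) + s) - w n) atTop (𝓝 0) :=
        tendsto_zero_iff_norm_tendsto_zero.mpr hz
      have := hg.add hz'
      rw [add_zero] at this
      refine this.congr fun n => ?_
      abel
    have heq2 : ∀ n : ℕ, T s (w n) = Real.exp (-(s * E0)) • w ((n : ℝ) + s) := by
      intro n
      have hv : T s (T (n : ℝ) f) = T ((n : ℝ) + s) f := by
        rw [add_comm, hT.semigroup s (n : ℝ) hs (Nat.cast_nonneg n)]; rfl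
      simp only [hw]
      rw [(T s).map_smul, hv, smul_smul, ← Real.exp_add,
        show -(s * E0) + ((n : ℝ) + s) * E0 = (n : ℝ) * E0 by ring]
    refine tendsto_nhds_unique hTs ?_
    have := hshift.const_smul (Real.exp (-(s * E0)))
    exact Tendsto.congr (fun n => (heq2 n).symm) this

lemma exists_ground {X : Type*} [MeasurableSpace X] (m : Measure X)
    (T : ℝ → Lp ℝ 2 m →L[ℝ] Lp ℝ 2 m) (ρ : Lp ℝ 2 m → Measure ℝ) (E0 : ℝ)
    (hT : IsHeatSemigroupOf T ρ E0) (p : ℝ → X → X → ℝ) (hp : IsKernelOf m T p)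
    (Φ : X → ℝ)
    (hΦ : ∀ x : X, Tendsto (fun t : ℝ => Real.sqrt (Real.exp (t * E0) * p t x x))
      atTop (𝓝 (Φ x))) (x : X) (hx : Φ x ≠ 0) :
    ∃ g : Lp ℝ 2 m, g ≠ 0 ∧ ∀ t : ℝ, 0 ≤ t → T t g = Real.exp (-(t * E0)) • g := by
  set f : Lp ℝ 2 m := MemLp.toLp (p 1 x) (hp.memL2 1 one_pos x) with hf
  refine exists_ground_aux hT f (Real.exp (-(2 * E0)) * (Φ x * Φ x))
    (mul_ne_zero (Real.exp_ne_zero _) (mul_ne_zero hx hx)) ?_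
  have hbase : Tendsto (fun t : ℝ => Real.sqrt (Real.exp ((t + 2) * E0) * p (t + 2) x x))
      atTop (𝓝 (Φ x)) := by
    have := (hΦ x).comp (tendsto_atTop_add_const_right atTop 2 tendsto_id)
    simpa [Function.comp_def] using this
  have hsq : Tendsto (fun t : ℝ => Real.exp ((t + 2) * E0) * p (t + 2) x x) atTop
      (𝓝 (Φ x * Φ x)) := by
    refine Tendsto.congr' ?_ (hbase.mul hbase)
    filter_upwards [eventually_ge_atTop (0 : ℝ)] with t ht
    exact Real.mul_self_sqrt
      (mul_nonneg (Real.exp_nonneg _) (hp.pos (t + 2) (by linarith) x x).le)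
  refine Tendsto.congr' ?_ (hsq.const_mul (Real.exp (-(2 * E0))))
  filter_upwards [eventually_gt_atTop (0 : ℝ)] with t ht
  rw [kernel_inner_eq hp x t ht, ← mul_assoc, ← Real.exp_add,
    show -(2 * E0) + (t + 2) * E0 = t * E0 by ring]

set_option maxHeartbeats 1000000 in
lemma not_ae_zero {X : Type*} [MeasurableSpace X] (m : Measure X)
    (T : ℝ → Lp ℝ 2 m →L[ℝ] Lp ℝ 2 m) (E0 : ℝ) (p : ℝ → X → X → ℝ)
    (hp : IsKernelOf m T p) (Φ : X → ℝ)
    (hΦ : ∀ x : X, Tendsto (fun t : ℝ => Real.sqrt (Real.exp (t * E0) * p t x x))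
      atTop (𝓝 (Φ x))) (g : Lp ℝ 2 m) (hg0 : g ≠ 0)
    (heig : ∀ t : ℝ, 0 ≤ t → T t g = Real.exp (-(t * E0)) • g) :
    ¬ (Φ =ᵐ[m] (fun _ => 0)) := by
  intro hae
  apply hg0
  rw [MeasureTheory.Lp.eq_zero_iff_ae_eq_zero]
  have hbound : ∀ n : ℕ, ∀ᵐ x ∂m, |g x| ≤
      Real.sqrt (Real.exp ((2 * ((n : ℝ) + 1)) * E0) * p (2 * ((n : ℝ) + 1)) x x) * ‖g‖ := by
    intro n
    set t : ℝ := (n : ℝ) + 1 with htdef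
    have ht : 0 < t := by positivity
    have h2 : (T t g : X → ℝ) =ᵐ[m] fun y => Real.exp (-(t * E0)) * g y := by
      rw [heig t ht.le]
      filter_upwards [Lp.coeFn_smul (Real.exp (-(t * E0))) g] with y hy
      simpa using hy
    filter_upwards [hp.represents t ht g, h2] with x hx1 hx2
    have he : Real.exp (-(t * E0)) * g x = ∫ y, p t x y * g y ∂m := by rw [← hx2, hx1]
    have hb : |∫ y, p t x y * g y ∂m| ≤ Real.sqrt (p (2 * t) x x) * ‖g‖ := by
      rw [← toLp_inner_eq hp t ht x g, ← toLp_norm_eq hp t ht x]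
      exact abs_real_inner_le_norm _ _
    have habs : |g x| = Real.exp (t * E0) * |∫ y, p t x y * g y ∂m| := by
      rw [← he, abs_mul, abs_of_pos (Real.exp_pos _), ← mul_assoc, ← Real.exp_add]
      simp
    calc |g x| ≤ Real.exp (t * E0) * (Real.sqrt (p (2 * t) x x) * ‖g‖) := by
          rw [habs]; exact mul_le_mul_of_nonneg_left hb (Real.exp_nonneg _)
      _ = Real.sqrt (Real.exp ((2 * t) * E0) * p (2 * t) x x) * ‖g‖ := by
          rw [Real.sqrt_mul (Real.exp_nonneg _), show (2 * t) * E0 = t * E0 + t * E0 by ring,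
            Real.exp_add, Real.sqrt_mul_self (Real.exp_nonneg _)]
          ring
  filter_upwards [ae_all_iff.mpr hbound, hae] with x hx hΦx
  have htend : Tendsto (fun n : ℕ => 2 * ((n : ℝ) + 1)) atTop atTop :=
    ((tendsto_atTop_add_const_right atTop 1 tendsto_natCast_atTop_atTop).const_mul_atTop
      two_pos)
  have hlim : Tendsto (fun n : ℕ =>
      Real.sqrt (Real.exp ((2 * ((n : ℝ) + 1)) * E0) * p (2 * ((n : ℝ) + 1)) x x) * ‖g‖)
      atTop (𝓝 (Φ x * ‖g‖)) := by
    have := ((hΦ x).comp htend).mul_const ‖g‖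
    simpa [Function.comp_def] using this
  have hle : |g x| ≤ Φ x * ‖g‖ := ge_of_tendsto hlim (Eventually.of_forall hx)
  have hΦx0 : Φ x = 0 := hΦx
  rw [hΦx0, zero_mul] at hle
  simpa using abs_nonpos_iff.mp hle 

/-- Let `L` be a selfadjoint operator in `L²(X, m)`, bounded below, with `E0`
the infimum of the spectrum of `L`, and assume that the semigroup `(e^{-tL})_{t≥0}` has a
kernel `p` satisfying (K1), (K2), (K3). For `t > 0` and `x ∈ X` set
`Φ_t(x) := (e^{tE0} p_t(x, x))^{1/2}`, and let `Φ` be the pointwise limit of `Φ_t` as `t → ∞`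
(which exists). Then the following are equivalent: (i) `E0` is an eigenvalue of `L`;
(ii) `Φ` is not the zero function in `L²(X, m)` (i.e., `Φ` is not `m`-a.e. zero);
(iii) there exists `x ∈ X` with `Φ(x) ≠ 0`. -/
theorem statement11 {X : Type*} [MeasurableSpace X] (m : Measure X) [SigmaFinite m]
    (T : ℝ → Lp ℝ 2 m →L[ℝ] Lp ℝ 2 m) (ρ : Lp ℝ 2 m → Measure ℝ) (E0 : ℝ)
    (hT : IsHeatSemigroupOf T ρ E0)
    (p : ℝ → X → X → ℝ) (hp : IsKernelOf m T p)
    (Φ : X → ℝ)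
    (hΦ : ∀ x : X, Tendsto (fun t : ℝ => Real.sqrt (Real.exp (t * E0) * p t x x))
      atTop (𝓝 (Φ x))) :
    ((∃ g : Lp ℝ 2 m, g ≠ 0 ∧ ∀ t : ℝ, 0 ≤ t → T t g = Real.exp (-(t * E0)) • g) ↔
      ¬ (Φ =ᵐ[m] (fun _ => 0))) ∧
    ((¬ (Φ =ᵐ[m] (fun _ => 0))) ↔ ∃ x : X, Φ x ≠ 0) := by
  have triv : ¬ (Φ =ᵐ[m] (fun _ => 0)) → ∃ x : X, Φ x ≠ 0 := by
    intro hne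
    by_contra hno
    push_neg at hno
    exact hne (Eventually.of_forall fun x => hno x)
  constructor
  · constructor
    · rintro ⟨g, hg0, heig⟩
      exact not_ae_zero m T E0 p hp Φ hΦ g hg0 heig
    · intro hne
      obtain ⟨x, hx⟩ := triv hne
      exact exists_ground m T ρ E0 hT p hp Φ hΦ x hx
  · constructor
    · exact triv
    · rintro ⟨x, hx⟩
      obtain ⟨g, hg0, heig⟩ := exists_ground m T ρ E0 hT p hp Φ hΦ x hx
      exact not_ae_zero m T E0 p hp Φ hΦ g hg0 heig
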